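/- Let a(r) = (1/2)√((r+3)(r−1)), b(r) = −√((r+3)(r−1))/(r+1), c(r) = √((r²−1)/2), h(r) = (r+1)/√((r+3)(r−1)) be the 𝔸₈ metric functions on (1, ∞), and define u₁(r) = 2/((r+1)³(r+3)), u₂(r) = −(r²+10r+13)/((r+1)³(r+3)³), u₃(r) = −2/((r+1)²(r+3)³). Then for all r > 1 the harmonic 4-form equations (55) hold: (1/h)(c⁴u₁)' − 2bc²u₂ + 4ac²u₃ = 0, (1/h)(a²c²u₂)' − a²b u₁ + bc²u₂ + 2ac²u₃ = 0, and (1/h)(abc²u₃)' + a²b u₁ + bc²u₂ = 0, primes denoting d/dr. (These u_i define the L²-normalisable harmonic 4-form of the Spin(7) manifold 𝔸₈ whose duality is opposite to that of the Cayley form.) -/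

import Mathlib

set_option maxHeartbeats 2000000


/-- The `L²`-normalisable harmonic 4-form of the Spin(7) manifold `𝔸₈`
(duality opposite to the Cayley form): with the `𝔸₈` metric functions
`a = (1/2)√((r+3)(r-1))`, `b = -√((r+3)(r-1))/(r+1)`, `c = √((r²-1)/2)`,
`h = (r+1)/√((r+3)(r-1))` on `(1, ∞)`, the functions
`u₁ = 2/((r+1)³(r+3))`, `u₂ = -(r²+10r+13)/((r+1)³(r+3)³)`,
`u₃ = -2/((r+1)²(r+3)³)` satisfy the harmonic 4-form equations (55):
`(1/h)(c⁴u₁)' - 2bc²u₂ + 4ac²u₃ = 0`,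
`(1/h)(a²c²u₂)' - a²b u₁ + bc²u₂ + 2ac²u₃ = 0`,
`(1/h)(abc²u₃)' + a²b u₁ + bc²u₂ = 0`. -/
theorem A8_harmonic_four_form
    (a b c h u₁ u₂ u₃ : ℝ → ℝ)
    (hadef : a = fun r => (1 / 2) * Real.sqrt ((r + 3) * (r - 1)))
    (hbdef : b = fun r => -Real.sqrt ((r + 3) * (r - 1)) / (r + 1))
    (hcdef : c = fun r => Real.sqrt ((r ^ 2 - 1) / 2))
    (hhdef : h = fun r => (r + 1) / Real.sqrt ((r + 3) * (r - 1)))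
    (hu₁ : u₁ = fun r => 2 / ((r + 1) ^ 3 * (r + 3)))
    (hu₂ : u₂ = fun r => -(r ^ 2 + 10 * r + 13) / ((r + 1) ^ 3 * (r + 3) ^ 3))
    (hu₃ : u₃ = fun r => -2 / ((r + 1) ^ 2 * (r + 3) ^ 3)) :
    ∀ r ∈ Set.Ioi (1 : ℝ),
      (1 / h r) * deriv (fun s => (c s) ^ 4 * u₁ s) r
          - 2 * b r * (c r) ^ 2 * u₂ r + 4 * a r * (c r) ^ 2 * u₃ r = 0 ∧
      (1 / h r) * deriv (fun s => (a s) ^ 2 * (c s) ^ 2 * u₂ s) r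
          - (a r) ^ 2 * b r * u₁ r + b r * (c r) ^ 2 * u₂ r
          + 2 * a r * (c r) ^ 2 * u₃ r = 0 ∧
      (1 / h r) * deriv (fun s => a s * b s * (c s) ^ 2 * u₃ s) r
          + (a r) ^ 2 * b r * u₁ r + b r * (c r) ^ 2 * u₂ r = 0 := by
  intro r hr
  have hr' : (1:ℝ) < r := hr
  have hr1 : (0:ℝ) < r + 1 := by linarith
  have hr3 : (0:ℝ) < r + 3 := by linarith
  have hrm : (0:ℝ) < r - 1 := by linarith
  have hmem : ∀ᶠ s in nhds r, s ∈ Set.Ioi (1:ℝ) := isOpen_Ioi.eventually_mem hr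
  set S := Real.sqrt ((r + 3) * (r - 1)) with hSdef
  have hSpos : 0 < S := Real.sqrt_pos.mpr (by positivity)
  have hS2 : S * S = (r + 3) * (r - 1) := Real.mul_self_sqrt (by positivity)
  have hc2 : (c r) ^ 2 = (r ^ 2 - 1) / 2 := by
    rw [hcdef]; exact Real.sq_sqrt (by nlinarith)
  have ha2 : (a r) ^ 2 = (r + 3) * (r - 1) / 4 := by
    rw [hadef]
    simp only [mul_pow]
    rw [Real.sq_sqrt (by positivity)]
    ring
  have harval : a r = (1/2) * S := by rw [hadef]
  have hbrval : b r = -S / (r + 1) := by rw [hbdef]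
  have hhrval : h r = (r + 1) / S := by rw [hhdef]
  have hu1r : u₁ r = 2 / ((r + 1) ^ 3 * (r + 3)) := by rw [hu₁]
  have hu2r : u₂ r = -(r ^ 2 + 10 * r + 13) / ((r + 1) ^ 3 * (r + 3) ^ 3) := by rw [hu₂]
  have hu3r : u₃ r = -2 / ((r + 1) ^ 2 * (r + 3) ^ 3) := by rw [hu₃]
  -- equation 1 derivative
  have hev1 : (fun s => (c s) ^ 4 * u₁ s) =ᶠ[nhds r]
      (fun s => (s - 1) ^ 2 / (2 * (s + 1) * (s + 3))) := by
    filter_upwards [hmem] with s hs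
    have hs1 : (1:ℝ) < s := hs
    rw [hcdef, hu₁]
    simp only
    have h4 : Real.sqrt ((s ^ 2 - 1) / 2) ^ 4 = ((s ^ 2 - 1) / 2) ^ 2 := by
      rw [show (4:ℕ) = 2 * 2 from rfl, pow_mul, Real.sq_sqrt (by nlinarith)]
    rw [h4]
    have h1 : s + 1 ≠ 0 := by linarith
    have h3 : s + 3 ≠ 0 := by linarith
    field_simp
    ring
  have hD1 : HasDerivAt (fun s : ℝ => (s - 1) ^ 2 / (2 * (s + 1) * (s + 3)))
      ((2 * (r - 1) * (2 * (r + 1) * (r + 3)) - (r - 1) ^ 2 * (2 * (r + 3) + 2 * (r + 1)))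
        / (2 * (r + 1) * (r + 3)) ^ 2) r := by
    have hN : HasDerivAt (fun s : ℝ => (s - 1) ^ 2) (2 * (r - 1)) r := by
      have := ((hasDerivAt_id r).sub_const 1).pow 2
      convert this using 1 <;> (try rfl) <;> simp [id_eq] <;> ring
    have hQ : HasDerivAt (fun s : ℝ => 2 * (s + 1) * (s + 3))
        (2 * (r + 3) + 2 * (r + 1)) r := by
      have := (((hasDerivAt_id r).add_const 1).const_mul 2).mul
        ((hasDerivAt_id r).add_const 3)
      convert this using 1 <;> (try rfl) <;> simp [id_eq] <;> ring
    exact hN.div hQ (mul_pos (mul_pos (by norm_num : (0:ℝ) < 2) hr1) hr3).ne'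
  have hd1 : deriv (fun s => (c s) ^ 4 * u₁ s) r
      = (2 * (r - 1) * (2 * (r + 1) * (r + 3)) - (r - 1) ^ 2 * (2 * (r + 3) + 2 * (r + 1)))
        / (2 * (r + 1) * (r + 3)) ^ 2 := hev1.deriv_eq.trans hD1.deriv
  -- equation 2 derivative
  have hev2 : (fun s => (a s) ^ 2 * (c s) ^ 2 * u₂ s) =ᶠ[nhds r]
      (fun s => -(s ^ 2 + 10 * s + 13) * (s - 1) ^ 2 / (8 * (s + 1) ^ 2 * (s + 3) ^ 2)) := by
    filter_upwards [hmem] with s hs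
    have hs1 : (1:ℝ) < s := hs
    rw [hadef, hcdef, hu₂]
    simp only [mul_pow]
    rw [Real.sq_sqrt (by nlinarith : (0:ℝ) ≤ (s + 3) * (s - 1)),
      Real.sq_sqrt (by nlinarith : (0:ℝ) ≤ (s ^ 2 - 1) / 2)]
    have h1 : s + 1 ≠ 0 := by linarith
    have h3 : s + 3 ≠ 0 := by linarith
    field_simp
    ring
  have hD2 : HasDerivAt
      (fun s : ℝ => -(s ^ 2 + 10 * s + 13) * (s - 1) ^ 2 / (8 * (s + 1) ^ 2 * (s + 3) ^ 2))
      (((-(2 * r + 10) * (r - 1) ^ 2 + -(r ^ 2 + 10 * r + 13) * (2 * (r - 1)))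
          * (8 * (r + 1) ^ 2 * (r + 3) ^ 2)
        - -(r ^ 2 + 10 * r + 13) * (r - 1) ^ 2
          * (16 * (r + 1) * (r + 3) ^ 2 + 8 * (r + 1) ^ 2 * (2 * (r + 3))))
        / (8 * (r + 1) ^ 2 * (r + 3) ^ 2) ^ 2) r := by
    have hN : HasDerivAt (fun s : ℝ => -(s ^ 2 + 10 * s + 13) * (s - 1) ^ 2)
        (-(2 * r + 10) * (r - 1) ^ 2 + -(r ^ 2 + 10 * r + 13) * (2 * (r - 1))) r := by
      have h1 : HasDerivAt (fun s : ℝ => -(s ^ 2 + 10 * s + 13)) (-(2 * r + 10)) r := by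
        have := (((hasDerivAt_id r).pow 2).add (((hasDerivAt_id r).const_mul 10).add_const 13)).neg
        convert this using 1 <;> (try rfl)
        · funext s; simp [id_eq]; ring
        · norm_num
      have h2 : HasDerivAt (fun s : ℝ => (s - 1) ^ 2) (2 * (r - 1)) r := by
        have := ((hasDerivAt_id r).sub_const 1).pow 2
        convert this using 1 <;> (try rfl) <;> simp [id_eq] <;> ring
      have := h1.mul h2
      convert this using 1 <;> (try rfl) <;> simp [id_eq] <;> ring
    have hQ : HasDerivAt (fun s : ℝ => 8 * (s + 1) ^ 2 * (s + 3) ^ 2)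
        (16 * (r + 1) * (r + 3) ^ 2 + 8 * (r + 1) ^ 2 * (2 * (r + 3))) r := by
      have h1 : HasDerivAt (fun s : ℝ => 8 * (s + 1) ^ 2) (16 * (r + 1)) r := by
        have := (((hasDerivAt_id r).add_const 1).pow 2).const_mul 8
        convert this using 1 <;> (try rfl) <;> simp [id_eq] <;> ring
      have h2 : HasDerivAt (fun s : ℝ => (s + 3) ^ 2) (2 * (r + 3)) r := by
        have := ((hasDerivAt_id r).add_const 3).pow 2
        convert this using 1 <;> (try rfl) <;> simp [id_eq] <;> ring
      have := h1.mul h2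
      convert this using 1 <;> (try rfl) <;> simp [id_eq] <;> ring
    exact hN.div hQ (mul_pos (mul_pos (by norm_num : (0:ℝ) < 8) (pow_pos hr1 2)) (pow_pos hr3 2)).ne'
  have hd2 : deriv (fun s => (a s) ^ 2 * (c s) ^ 2 * u₂ s) r
      = ((-(2 * r + 10) * (r - 1) ^ 2 + -(r ^ 2 + 10 * r + 13) * (2 * (r - 1)))
          * (8 * (r + 1) ^ 2 * (r + 3) ^ 2)
        - -(r ^ 2 + 10 * r + 13) * (r - 1) ^ 2
          * (16 * (r + 1) * (r + 3) ^ 2 + 8 * (r + 1) ^ 2 * (2 * (r + 3))))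
        / (8 * (r + 1) ^ 2 * (r + 3) ^ 2) ^ 2 := hev2.deriv_eq.trans hD2.deriv
  -- equation 3 derivative
  have hev3 : (fun s => a s * b s * (c s) ^ 2 * u₃ s) =ᶠ[nhds r]
      (fun s => (s - 1) ^ 2 / (2 * (s + 1) ^ 2 * (s + 3) ^ 2)) := by
    filter_upwards [hmem] with s hs
    have hs1 : (1:ℝ) < s := hs
    rw [hadef, hbdef, hcdef, hu₃]
    simp only
    rw [Real.sq_sqrt (by nlinarith : (0:ℝ) ≤ (s ^ 2 - 1) / 2)]
    have h1 : s + 1 ≠ 0 := by linarith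
    have h3 : s + 3 ≠ 0 := by linarith
    have hmm : (1/2) * Real.sqrt ((s + 3) * (s - 1))
        * (-Real.sqrt ((s + 3) * (s - 1)) / (s + 1))
        = -((s + 3) * (s - 1)) / (2 * (s + 1)) := by
      have hsq := Real.mul_self_sqrt (by nlinarith : (0:ℝ) ≤ (s + 3) * (s - 1))
      calc (1/2) * Real.sqrt ((s + 3) * (s - 1))
            * (-Real.sqrt ((s + 3) * (s - 1)) / (s + 1))
          = -(Real.sqrt ((s + 3) * (s - 1)) * Real.sqrt ((s + 3) * (s - 1)))
            / (2 * (s + 1)) := by field_simp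
        _ = -((s + 3) * (s - 1)) / (2 * (s + 1)) := by rw [hsq]
    rw [hmm]
    field_simp
    ring
  have hD3 : HasDerivAt (fun s : ℝ => (s - 1) ^ 2 / (2 * (s + 1) ^ 2 * (s + 3) ^ 2))
      ((2 * (r - 1) * (2 * (r + 1) ^ 2 * (r + 3) ^ 2)
        - (r - 1) ^ 2 * (4 * (r + 1) * (r + 3) ^ 2 + 2 * (r + 1) ^ 2 * (2 * (r + 3))))
        / (2 * (r + 1) ^ 2 * (r + 3) ^ 2) ^ 2) r := by
    have hN : HasDerivAt (fun s : ℝ => (s - 1) ^ 2) (2 * (r - 1)) r := by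
      have := ((hasDerivAt_id r).sub_const 1).pow 2
      convert this using 1 <;> (try rfl) <;> simp [id_eq] <;> ring
    have hQ : HasDerivAt (fun s : ℝ => 2 * (s + 1) ^ 2 * (s + 3) ^ 2)
        (4 * (r + 1) * (r + 3) ^ 2 + 2 * (r + 1) ^ 2 * (2 * (r + 3))) r := by
      have h1 : HasDerivAt (fun s : ℝ => 2 * (s + 1) ^ 2) (4 * (r + 1)) r := by
        have := (((hasDerivAt_id r).add_const 1).pow 2).const_mul 2
        convert this using 1 <;> (try rfl) <;> simp [id_eq] <;> ring
      have h2 : HasDerivAt (fun s : ℝ => (s + 3) ^ 2) (2 * (r + 3)) r := by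
        have := ((hasDerivAt_id r).add_const 3).pow 2
        convert this using 1 <;> (try rfl) <;> simp [id_eq] <;> ring
      have := h1.mul h2
      convert this using 1 <;> (try rfl) <;> simp [id_eq] <;> ring
    exact hN.div hQ (mul_pos (mul_pos (by norm_num : (0:ℝ) < 2) (pow_pos hr1 2)) (pow_pos hr3 2)).ne'
  have hd3 : deriv (fun s => a s * b s * (c s) ^ 2 * u₃ s) r
      = (2 * (r - 1) * (2 * (r + 1) ^ 2 * (r + 3) ^ 2)
        - (r - 1) ^ 2 * (4 * (r + 1) * (r + 3) ^ 2 + 2 * (r + 1) ^ 2 * (2 * (r + 3))))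
        / (2 * (r + 1) ^ 2 * (r + 3) ^ 2) ^ 2 := hev3.deriv_eq.trans hD3.deriv
  have h1ne : (r + 1) ≠ 0 := ne_of_gt hr1
  have h3ne : (r + 3) ≠ 0 := ne_of_gt hr3
  have hSne : S ≠ 0 := ne_of_gt hSpos
  refine ⟨?_, ?_, ?_⟩
  · rw [hd1, hhrval, hbrval, harval, hc2, hu2r, hu3r]
    field_simp
    ring
  · rw [hd2, hhrval, hbrval, ha2, harval, hc2, hu1r, hu2r, hu3r]
    field_simp
    ring
  · rw [hd3, hhrval, hbrval, ha2, hc2, hu1r, hu2r]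
    field_simp
    ring
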